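/- For a random variable X with survival function exp(−(β/2)((θ+x)/θ)^{2λ}) on [−θ,∞), the moment generating function expands as M(t) = Σ_{c=0}^∞ (t^c/c!) Σ_{j=0}^{c} C(c,j) θ^j (2/β)^{j/(2λ)} (−θ)^{c−j} Γ(j/(2λ)+1), provided all moments are finite and the series converges. -/

import Mathlib

open MeasureTheory Real
open scoped ENNReal NNReal

/-- Series expansion of the mgf of the Rayleigh Lomax distribution. -/
theorem rayleigh_lomax_mgf_series
    {Ω : Type*} [MeasurableSpace Ω] (μ : Measure Ω) [IsProbabilityMeasure μ]
    (X : Ω → ℝ) (hX : Measurable X)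
    (θ lam β : ℝ) (hθ : 0 < θ) (hlam : 0 < lam) (hβ : 0 < β)
    (hsurv : ∀ x : ℝ, -θ ≤ x →
      μ {ω | x < X ω} = ENNReal.ofReal (exp (-(β / 2) * ((θ + x) / θ) ^ (2 * lam))))
    (hsupp : ∀ᵐ ω ∂μ, -θ ≤ X ω)
    (t : ℝ)
    (hmgf : Integrable (fun ω => exp (t * X ω)) μ)
    (hmom : ∀ c : ℕ, Integrable (fun ω => X ω ^ c) μ)
    (hsum : Summable (fun c : ℕ =>
      t ^ c / (Nat.factorial c : ℝ) *
        ∑ j ∈ Finset.range (c + 1),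
          (c.choose j : ℝ) * θ ^ j * (2 / β) ^ ((j : ℝ) / (2 * lam)) *
            (-θ) ^ (c - j) * Real.Gamma ((j : ℝ) / (2 * lam) + 1))) :
    ∫ ω, exp (t * X ω) ∂μ
      = ∑' c : ℕ,
          t ^ c / (Nat.factorial c : ℝ) *
            ∑ j ∈ Finset.range (c + 1),
              (c.choose j : ℝ) * θ ^ j * (2 / β) ^ ((j : ℝ) / (2 * lam)) *
                (-θ) ^ (c - j) * Real.Gamma ((j : ℝ) / (2 * lam) + 1) := by
  classical
  have h2lam : (0:ℝ) < 2 * lam := by linarith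
  set p : ℝ := (2 * lam)⁻¹ with hp
  have hppos : 0 < p := inv_pos.2 h2lam
  have hexp : ∀ j : ℕ, (j : ℝ) / (2 * lam) = p * j := by
    intro j; rw [hp, div_eq_mul_inv, mul_comm]
  set S : ℕ → ℝ := fun c => ∑ j ∈ Finset.range (c + 1),
      (c.choose j : ℝ) * θ ^ j * (2 / β) ^ ((j : ℝ) / (2 * lam)) *
        (-θ) ^ (c - j) * Real.Gamma ((j : ℝ) / (2 * lam) + 1) with hSdef
  -- the transformation function
  set f : ℝ → ℝ := fun w => θ * (2 * w / β) ^ p - θ with hfdef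
  have hf_cont : Continuous f := by
    have h1 : Continuous fun w : ℝ => (2 * w / β) ^ p :=
      (Real.continuous_rpow_const hppos.le).comp ((continuous_const.mul continuous_id).div_const β)
    exact (continuous_const.mul h1).sub continuous_const
  have hf_meas : Measurable f := hf_cont.measurable
  -- the exponential measure
  set κ : Measure ℝ := (volume.restrict (Set.Ioi 0)).withDensity
      (fun w => ENNReal.ofReal (Real.exp (-w))) with hκdef
  have hIoi : ∀ a : ℝ, 0 ≤ a → κ (Set.Ioi a) = ENNReal.ofReal (exp (-a)) := by
    intro a ha
    rw [hκdef, withDensity_apply _ measurableSet_Ioi,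
      Measure.restrict_restrict measurableSet_Ioi, Set.Ioi_inter_Ioi, max_eq_left ha]
    rw [← ofReal_integral_eq_lintegral_ofReal]
    · rw [integral_exp_neg_Ioi]
    · have := exp_neg_integrableOn_Ioi a one_pos
      simp only [neg_mul, one_mul] at this
      exact this
    · exact Filter.Eventually.of_forall fun x => (exp_pos _).le
  have hκmeas : ∀ s : Set ℝ, MeasurableSet s →
      κ s = ∫⁻ w in s ∩ Set.Ioi 0, ENNReal.ofReal (Real.exp (-w)) := by
    intro s hs
    rw [hκdef, withDensity_apply _ hs, Measure.restrict_restrict hs]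
  -- preimage identities
  have hpre : ∀ x : ℝ, -θ ≤ x →
      f ⁻¹' (Set.Ioi x) ∩ Set.Ioi 0 = Set.Ioi (β / 2 * ((θ + x) / θ) ^ (2 * lam)) := by
    intro x hx
    set r : ℝ := (θ + x) / θ with hrdef
    have hr : 0 ≤ r := div_nonneg (by linarith) hθ.le
    have hinv : p * (2 * lam) = 1 := inv_mul_cancel₀ h2lam.ne'
    ext w
    simp only [Set.mem_inter_iff, Set.mem_preimage, Set.mem_Ioi, hfdef]
    constructor
    · rintro ⟨hfw, hw⟩
      have hb : 0 < 2 * w / β := by positivity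
      have h1 : r < (2 * w / β) ^ p := by
        rw [hrdef, div_lt_iff₀ hθ] at *
        nlinarith [hfw]
      have h2 : r ^ (2 * lam) < ((2 * w / β) ^ p) ^ (2 * lam) :=
        Real.rpow_lt_rpow hr h1 h2lam
      rw [← Real.rpow_mul hb.le, hinv, Real.rpow_one] at h2
      calc β / 2 * r ^ (2 * lam) < β / 2 * (2 * w / β) := by
            have : 0 < β / 2 := by positivity
            exact (mul_lt_mul_iff_right₀ this).2 h2
        _ = w := by field_simp
    · intro hw
      have ha0 : 0 ≤ β / 2 * r ^ (2 * lam) :=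
        mul_nonneg (by positivity) (Real.rpow_nonneg hr _)
      have hwpos : 0 < w := lt_of_le_of_lt ha0 hw
      have h1 : r ^ (2 * lam) < 2 * w / β := by
        rw [lt_div_iff₀ hβ]
        nlinarith [hw]
      have h2 : (r ^ (2 * lam)) ^ p < (2 * w / β) ^ p :=
        Real.rpow_lt_rpow (Real.rpow_nonneg hr _) h1 hppos
      rw [← Real.rpow_mul hr, mul_comm (2*lam) p, hinv, Real.rpow_one] at h2
      refine ⟨?_, hwpos⟩
      have : θ * r < θ * (2 * w / β) ^ p := (mul_lt_mul_iff_right₀ hθ).2 h2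
      rw [hrdef, mul_div_cancel₀ _ hθ.ne'] at this
      linarith
  have hpre' : ∀ x : ℝ, x < -θ → f ⁻¹' (Set.Ioi x) ∩ Set.Ioi 0 = Set.Ioi 0 := by
    intro x hx
    ext w
    simp only [Set.mem_inter_iff, Set.mem_preimage, Set.mem_Ioi, hfdef]
    refine ⟨fun h => h.2, fun hw => ⟨?_, hw⟩⟩
    have hb : 0 < 2 * w / β := by positivity
    have : 0 < (2 * w / β) ^ p := Real.rpow_pos_of_pos hb _
    nlinarith
  -- measure of Ioi under the mapped measure
  have hmapIoi : ∀ x : ℝ, (κ.map f) (Set.Ioi x) = μ {ω | x < X ω} := by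
    intro x
    rw [Measure.map_apply hf_meas measurableSet_Ioi,
      hκmeas _ (hf_meas measurableSet_Ioi)]
    rcases le_or_gt (-θ) x with hx | hx
    · rw [hpre x hx, hsurv x hx]
      have ha : 0 ≤ β / 2 * ((θ + x) / θ) ^ (2 * lam) :=
        mul_nonneg (by positivity) (Real.rpow_nonneg (div_nonneg (by linarith) hθ.le) _)
      have := hIoi _ ha
      rw [hκmeas _ measurableSet_Ioi, Set.Ioi_inter_Ioi, max_eq_left ha] at this
      rw [this]
      congr 1
      ring_nf
    · rw [hpre' x hx]
      have h1 : {ω | x < X ω} =ᵐ[μ] (Set.univ : Set Ω) := by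
        rw [Filter.eventuallyEq_univ]
        filter_upwards [hsupp] with ω hω
        exact lt_of_lt_of_le hx hω
      rw [measure_congr h1, measure_univ]
      have := hIoi 0 le_rfl
      rw [hκmeas _ measurableSet_Ioi, Set.Ioi_inter_Ioi, max_self] at this
      rw [this, neg_zero, exp_zero, ENNReal.ofReal_one]
  -- total mass of κ.map f
  have hmuniv : (κ.map f) Set.univ = 1 := by
    rw [Measure.map_apply hf_meas MeasurableSet.univ, Set.preimage_univ,
      hκmeas _ MeasurableSet.univ, Set.univ_inter]
    have := hIoi 0 le_rfl
    rw [hκmeas _ measurableSet_Ioi, Set.Ioi_inter_Ioi, max_self] at this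
    rw [this, neg_zero, exp_zero, ENNReal.ofReal_one]
  -- the law of X equals κ.map f
  haveI hprobX : IsProbabilityMeasure (μ.map X) := Measure.isProbabilityMeasure_map hX.aemeasurable
  have hXIoi : ∀ x : ℝ, (μ.map X) (Set.Ioi x) = μ {ω | x < X ω} := by
    intro x
    rw [Measure.map_apply hX measurableSet_Ioi]
    rfl
  haveI hprobm : IsProbabilityMeasure (κ.map f) := ⟨hmuniv⟩
  have hlaw : μ.map X = κ.map f := by
    refine Measure.ext_of_Iic (μ.map X) (κ.map f) fun a => ?_
    have h1 := measure_compl (measurableSet_Ioi (a := a)) (measure_ne_top (μ.map X) _)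
    have h2 := measure_compl (measurableSet_Ioi (a := a)) (measure_ne_top (κ.map f) _)
    rw [Set.compl_Ioi] at h1 h2
    rw [h1, h2, measure_univ, hmuniv, hXIoi a, hmapIoi a]
  -- moment computation
  have hmoments : ∀ c : ℕ, ∫ ω, X ω ^ c ∂μ = S c := by
    intro c
    have hmm : AEStronglyMeasurable (fun x : ℝ => x ^ c) (κ.map f) :=
      (measurable_id.pow_const c).aestronglyMeasurable
    have hmm' : AEStronglyMeasurable (fun x : ℝ => x ^ c) (μ.map X) :=
      (measurable_id.pow_const c).aestronglyMeasurable
    have h1 : ∫ ω, X ω ^ c ∂μ = ∫ x, x ^ c ∂(μ.map X) :=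
      (integral_map hX.aemeasurable hmm').symm
    rw [h1, hlaw, integral_map hf_meas.aemeasurable hmm]
    -- now ∫ w, f w ^ c ∂κ
    have hdens : Measurable fun w : ℝ => (Real.exp (-w)).toNNReal :=
      (continuous_exp.comp continuous_neg).measurable.real_toNNReal
    have hκform : κ = (volume.restrict (Set.Ioi 0)).withDensity
        (fun w => ((Real.exp (-w)).toNNReal : ℝ≥0∞)) := rfl
    rw [hκform, integral_withDensity_eq_integral_smul hdens]
    have h2 : ∀ w : ℝ, (Real.exp (-w)).toNNReal • (f w ^ c) = Real.exp (-w) * f w ^ c := by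
      intro w
      rw [NNReal.smul_def, Real.coe_toNNReal _ (exp_pos _).le, smul_eq_mul]
    simp_rw [h2]
    -- expand pointwise on Ioi 0
    have h3 : Set.EqOn (fun w => Real.exp (-w) * f w ^ c)
        (fun w => ∑ j ∈ Finset.range (c + 1),
          ((c.choose j : ℝ) * θ ^ j * (2 / β) ^ ((j : ℝ) / (2 * lam)) * (-θ) ^ (c - j)) *
            (Real.exp (-w) * w ^ ((j : ℝ) / (2 * lam)))) (Set.Ioi 0) := by
      intro w hw
      have hw0 : (0:ℝ) < w := hw
      have hfw : f w = θ * (2 / β) ^ p * w ^ p + (-θ) := by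
        have hrw : 2 * w / β = (2 / β) * w := by ring
        rw [hfdef]
        simp only
        rw [hrw, Real.mul_rpow (by positivity) hw0.le]
        ring
      simp only
      rw [hfw, add_pow, Finset.mul_sum]
      refine Finset.sum_congr rfl fun j hj => ?_
      have h4 : (θ * (2 / β) ^ p * w ^ p) ^ j
          = θ ^ j * ((2 / β) ^ ((j:ℝ) / (2 * lam)) * w ^ ((j:ℝ) / (2 * lam))) := by
        rw [mul_pow, mul_pow, ← Real.rpow_natCast ((2 / β) ^ p) j,
          ← Real.rpow_natCast (w ^ p) j, ← Real.rpow_mul (by positivity),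
          ← Real.rpow_mul hw0.le, hexp j, mul_assoc]
      rw [h4]
      ring
    rw [setIntegral_congr_fun measurableSet_Ioi h3]
    have hint : ∀ j ∈ Finset.range (c + 1), IntegrableOn
        (fun w => ((c.choose j : ℝ) * θ ^ j * (2 / β) ^ ((j : ℝ) / (2 * lam)) * (-θ) ^ (c - j)) *
          (Real.exp (-w) * w ^ ((j : ℝ) / (2 * lam)))) (Set.Ioi 0) := by
      intro j _
      have hq : (0:ℝ) < (j : ℝ) / (2 * lam) + 1 := by positivity
      have := (Real.GammaIntegral_convergent hq).const_mul
        ((c.choose j : ℝ) * θ ^ j * (2 / β) ^ ((j : ℝ) / (2 * lam)) * (-θ) ^ (c - j))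
      simp only [add_sub_cancel_right] at this
      exact this
    rw [integral_finset_sum _ hint, hSdef]
    refine Finset.sum_congr rfl fun j hj => ?_
    rw [integral_const_mul]
    have hq : (0:ℝ) < (j : ℝ) / (2 * lam) + 1 := by positivity
    have hg := Real.Gamma_eq_integral hq
    rw [add_sub_cancel_right] at hg
    rw [← hg]
  -- absolute moment bound
  have habs : ∀ c : ℕ, Integrable (fun ω => |X ω| ^ c) μ := by
    intro c
    have : (fun ω => |X ω| ^ c) = fun ω => |X ω ^ c| := by
      funext ω; rw [abs_pow]
    rw [this]
    exact (hmom c).abs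
  have habs_le : ∀ c : ℕ, ∫ ω, |X ω| ^ c ∂μ ≤ S c + 2 * θ ^ c := by
    intro c
    have hpt : ∀ᵐ ω ∂μ, |X ω| ^ c ≤ X ω ^ c + 2 * θ ^ c := by
      filter_upwards [hsupp] with ω hω
      rcases le_or_gt 0 (X ω) with h | h
      · rw [abs_of_nonneg h]
        have : (0:ℝ) ≤ θ ^ c := by positivity
        linarith
      · have h1 : |X ω| ≤ θ := by
          rw [abs_of_neg h]; linarith
        have h2 : |X ω| ^ c ≤ θ ^ c := pow_le_pow_left₀ (abs_nonneg _) h1 c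
        have h3 : -(θ ^ c) ≤ X ω ^ c := by
          have := neg_abs_le (X ω ^ c)
          rw [abs_pow] at this
          nlinarith [this, h2]
        linarith
    have hadd : Integrable (fun ω => X ω ^ c + 2 * θ ^ c) μ := (hmom c).add (integrable_const _)
    have h7 := integral_mono_ae (habs c) hadd hpt
    rw [integral_add (hmom c) (integrable_const _), hmoments c, integral_const] at h7
    simpa [measure_univ] using h7
  -- the series terms
  have hFint : ∀ c : ℕ, Integrable (fun ω => (t * X ω) ^ c / (Nat.factorial c : ℝ)) μ := by
    intro c
    have : (fun ω => (t * X ω) ^ c / (Nat.factorial c : ℝ))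
        = fun ω => (t ^ c / (Nat.factorial c : ℝ)) * X ω ^ c := by
      funext ω; rw [mul_pow]; ring
    rw [this]
    exact (hmom c).const_mul _
  have hbound : ∀ c : ℕ, ∫ ω, ‖(t * X ω) ^ c / (Nat.factorial c : ℝ)‖ ∂μ
      ≤ |t ^ c / (Nat.factorial c : ℝ) * S c| + 2 * (|t| * θ) ^ c / (Nat.factorial c : ℝ) := by
    intro c
    have hfac : (0:ℝ) < (Nat.factorial c : ℝ) := Nat.cast_pos.2 (Nat.factorial_pos c)
    have h1 : ∀ ω, ‖(t * X ω) ^ c / (Nat.factorial c : ℝ)‖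
        = (|t| ^ c / (Nat.factorial c : ℝ)) * |X ω| ^ c := by
      intro ω
      rw [norm_div, norm_pow, norm_mul, Real.norm_eq_abs, Real.norm_eq_abs,
        Real.norm_natCast, mul_pow]
      ring
    simp_rw [h1]
    rw [integral_const_mul]
    have h2 : (|t| ^ c / (Nat.factorial c : ℝ)) * ∫ ω, |X ω| ^ c ∂μ
        ≤ (|t| ^ c / (Nat.factorial c : ℝ)) * (S c + 2 * θ ^ c) := by
      apply mul_le_mul_of_nonneg_left (habs_le c) (by positivity)
    refine h2.trans ?_
    have h3 : (|t| ^ c / (Nat.factorial c : ℝ)) * S c ≤ |t ^ c / (Nat.factorial c : ℝ) * S c| := by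
      calc (|t| ^ c / (Nat.factorial c : ℝ)) * S c
          ≤ |(|t| ^ c / (Nat.factorial c : ℝ)) * S c| := le_abs_self _
        _ = |t ^ c / (Nat.factorial c : ℝ) * S c| := by
            rw [abs_mul, abs_mul, abs_div, abs_div, abs_pow, abs_pow, abs_abs,
              Nat.abs_cast]
    have h4 : (|t| ^ c / (Nat.factorial c : ℝ)) * (2 * θ ^ c)
        = 2 * (|t| * θ) ^ c / (Nat.factorial c : ℝ) := by
      rw [mul_pow]; ring
    nlinarith [h3]
  have hBsum : Summable (fun c : ℕ =>
      |t ^ c / (Nat.factorial c : ℝ) * S c| + 2 * (|t| * θ) ^ c / (Nat.factorial c : ℝ)) := by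
    refine Summable.add hsum.abs ?_
    have : (fun c : ℕ => 2 * (|t| * θ) ^ c / (Nat.factorial c : ℝ))
        = fun c : ℕ => 2 * ((|t| * θ) ^ c / (Nat.factorial c : ℝ)) := by
      funext c; ring
    rw [this]
    exact (Real.summable_pow_div_factorial (|t| * θ)).mul_left 2
  -- interchange of sum and integral
  have hkey : ∫ ω, exp (t * X ω) ∂μ
      = ∑' c : ℕ, ∫ ω, (t * X ω) ^ c / (Nat.factorial c : ℝ) ∂μ := by
    have h0 : (fun ω => exp (t * X ω))
        = fun ω => ∑' c : ℕ, (t * X ω) ^ c / (Nat.factorial c : ℝ) := by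
      funext ω
      rw [Real.exp_eq_exp_ℝ, NormedSpace.exp_eq_tsum_div]
    rw [h0]
    refine integral_tsum (fun c => ?_) ?_
    · exact (((hX.const_mul t).pow_const c).div_const _).aestronglyMeasurable
    · have hle : ∑' c : ℕ, ∫⁻ ω, ‖(t * X ω) ^ c / (Nat.factorial c : ℝ)‖ₑ ∂μ
          ≤ ENNReal.ofReal (∑' c : ℕ, (|t ^ c / (Nat.factorial c : ℝ) * S c| +
              2 * (|t| * θ) ^ c / (Nat.factorial c : ℝ))) := by
        have e1 : ∑' c : ℕ, ∫⁻ ω, ‖(t * X ω) ^ c / (Nat.factorial c : ℝ)‖ₑ ∂μ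
            = ∑' c : ℕ, ENNReal.ofReal (∫ ω, ‖(t * X ω) ^ c / (Nat.factorial c : ℝ)‖ ∂μ) := by
          refine tsum_congr fun c => ?_
          rw [ofReal_integral_norm_eq_lintegral_enorm (hFint c)]
        have e2 : ∑' c : ℕ, ENNReal.ofReal (∫ ω, ‖(t * X ω) ^ c / (Nat.factorial c : ℝ)‖ ∂μ)
            ≤ ∑' c : ℕ, ENNReal.ofReal (|t ^ c / (Nat.factorial c : ℝ) * S c| +
              2 * (|t| * θ) ^ c / (Nat.factorial c : ℝ)) :=
          ENNReal.tsum_le_tsum fun c => ENNReal.ofReal_le_ofReal (hbound c)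
        have e3 : ∑' c : ℕ, ENNReal.ofReal (|t ^ c / (Nat.factorial c : ℝ) * S c| +
              2 * (|t| * θ) ^ c / (Nat.factorial c : ℝ))
            = ENNReal.ofReal (∑' c : ℕ, (|t ^ c / (Nat.factorial c : ℝ) * S c| +
              2 * (|t| * θ) ^ c / (Nat.factorial c : ℝ))) := by
          refine (ENNReal.ofReal_tsum_of_nonneg (fun c => ?_) hBsum).symm
          have : (0:ℝ) ≤ 2 * (|t| * θ) ^ c / (Nat.factorial c : ℝ) := by positivity
          positivity
        rw [e1, ← e3]
        exact e2
      exact ne_top_of_le_ne_top ENNReal.ofReal_ne_top hle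
  rw [hkey]
  refine tsum_congr fun c => ?_
  have h5 : (fun ω => (t * X ω) ^ c / (Nat.factorial c : ℝ))
      = fun ω => (t ^ c / (Nat.factorial c : ℝ)) * X ω ^ c := by
    funext ω; rw [mul_pow]; ring
  rw [h5, integral_const_mul, hmoments c]
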